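/- Let G be a finite subgroup of SO(3). Then the set of points of the unit sphere S² ⊂ ℝ³ having nontrivial stabilizer in G, namely { x : ‖x‖ = 1 and ∃ g ∈ G, g ≠ 1 ∧ g • x = x }, is finite. -/

import Mathlib

set_option synthInstance.maxHeartbeats 1000000

/-- `SO(3)`: the group of real orthogonal `3×3` matrices of determinant `1`,
realized as a subgroup of the orthogonal group `O(3)`. -/
def SO3 : Subgroup (Matrix.orthogonalGroup (Fin 3) ℝ) where
  carrier := {A | ((A : Matrix (Fin 3) (Fin 3) ℝ)).det = 1}
  one_mem' := by simp
  mul_mem' := by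
    intro a b ha hb
    simp only [Set.mem_setOf_eq, Matrix.UnitaryGroup.mul_val, Matrix.det_mul] at *
    rw [ha, hb, mul_one]
  inv_mem' := by
    intro a ha
    simp only [Set.mem_setOf_eq, Matrix.UnitaryGroup.inv_val, Matrix.star_eq_conjTranspose,
      Matrix.det_conjTranspose, star_trivial] at *
    exact ha

/-- The orthogonal group `O(3)` acts on `ℝ³` by matrix–vector multiplication. -/
noncomputable instance : MulAction (Matrix.orthogonalGroup (Fin 3) ℝ) (EuclideanSpace ℝ (Fin 3)) where
  smul A v := WithLp.toLp 2 (Matrix.mulVec (A : Matrix (Fin 3) (Fin 3) ℝ) v)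
  one_smul v := by
    change WithLp.toLp 2 (Matrix.mulVec ((1 : Matrix.orthogonalGroup (Fin 3) ℝ) :
      Matrix (Fin 3) (Fin 3) ℝ) v) = v
    simp
  mul_smul A B v := by
    change WithLp.toLp 2 (Matrix.mulVec ((A * B : Matrix.orthogonalGroup (Fin 3) ℝ) :
      Matrix (Fin 3) (Fin 3) ℝ) v) = WithLp.toLp 2 (Matrix.mulVec (A : Matrix (Fin 3) (Fin 3) ℝ)
      (WithLp.toLp 2 (Matrix.mulVec (B : Matrix (Fin 3) (Fin 3) ℝ) v)))
    simp [Matrix.mulVec_mulVec]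

open Matrix

lemma myT (A : Matrix (Fin 3) (Fin 3) ℝ) (h : star A * A = 1) : Aᵀ * A = 1 := by
  have : star A = Aᵀ := by
    ext i j; simp [Matrix.conjTranspose_apply]
  rwa [this] at h

lemma dot_inv (A : Matrix (Fin 3) (Fin 3) ℝ) (h : Aᵀ * A = 1) (u w : Fin 3 → ℝ) :
    (A *ᵥ u) ⬝ᵥ (A *ᵥ w) = u ⬝ᵥ w := by
  rw [Matrix.dotProduct_mulVec, Matrix.vecMul_mulVec, h, Matrix.vecMul_one]

lemma det_rows (A : Matrix (Fin 3) (Fin 3) ℝ) (u x y : Fin 3 → ℝ) :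
    Matrix.det ![A *ᵥ u, A *ᵥ x, A *ᵥ y] = Matrix.det ![u, x, y] * A.det := by
  rw [Matrix.det_fin_three ![A *ᵥ u, A *ᵥ x, A *ᵥ y], Matrix.det_fin_three ![u, x, y]]
  simp only [Matrix.det_fin_three, Matrix.mulVec, dotProduct, Fin.sum_univ_three,
    Matrix.cons_val', Matrix.cons_val_zero, Matrix.cons_val_one, Matrix.head_cons,
    Matrix.cons_val_two, Matrix.tail_cons, Matrix.empty_val', Matrix.cons_val_fin_one,
    Matrix.head_fin_const]
  ring

lemma cross_mulVec (A : Matrix (Fin 3) (Fin 3) ℝ) (h : Aᵀ * A = 1) (hdet : A.det = 1)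
    (x y : Fin 3 → ℝ) :
    A *ᵥ (crossProduct x y) = crossProduct (A *ᵥ x) (A *ᵥ y) := by
  haveI := A.invertibleOfIsUnitDet (by simp [hdet])
  have key : ∀ u, (A *ᵥ u) ⬝ᵥ (A *ᵥ (crossProduct x y))
      = (A *ᵥ u) ⬝ᵥ (crossProduct (A *ᵥ x) (A *ᵥ y)) := by
    intro u
    rw [dot_inv A h, triple_product_eq_det, triple_product_eq_det, det_rows, hdet, mul_one]
  funext i
  have := key (A⁻¹ *ᵥ (Pi.single i 1))
  rwa [Matrix.mulVec_mulVec, Matrix.mul_nonsing_inv A (by simp [hdet]),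
    Matrix.one_mulVec, single_dotProduct, single_dotProduct,
    one_mul, one_mul] at this

lemma fix_two (A : Matrix (Fin 3) (Fin 3) ℝ) (h : Aᵀ * A = 1) (hdet : A.det = 1)
    {x y : Fin 3 → ℝ} (hxy : LinearIndependent ℝ ![x, y])
    (hx : A *ᵥ x = x) (hy : A *ᵥ y = y) : A = 1 := by
  set z := crossProduct x y with hz
  have hzfix : A *ᵥ z = z := by
    rw [hz, cross_mulVec A h hdet, hx, hy]
  have hzne : z ≠ 0 := crossProduct_ne_zero_iff_linearIndependent.2 hxy
  set B : Matrix (Fin 3) (Fin 3) ℝ := Matrix.of ![x, y, z] with hB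
  have hBdet : B.det ≠ 0 := by
    have e1 : B.det = x ⬝ᵥ crossProduct y z := (triple_product_eq_det x y z).symm
    rw [e1, triple_product_permutation, triple_product_permutation, ← hz]
    intro hc
    exact hzne (dotProduct_self_eq_zero.mp hc)
  have hfix : ∀ j : Fin 3, A *ᵥ B j = B j := by
    intro j
    fin_cases j
    · exact hx
    · exact hy
    · exact hzfix
  have hmul : A * Bᵀ = Bᵀ := by
    ext i j
    have e : (A * Bᵀ) i j = (A *ᵥ (B j)) i := by
      simp [Matrix.mul_apply, Matrix.mulVec, dotProduct]
    rw [e, hfix j]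
    rfl
  have hBT : IsUnit (Bᵀ).det := by
    rw [Matrix.det_transpose]; exact Ne.isUnit hBdet
  calc A = A * (Bᵀ * (Bᵀ)⁻¹) := by rw [Matrix.mul_nonsing_inv _ hBT, mul_one]
    _ = Bᵀ * (Bᵀ)⁻¹ := by rw [← mul_assoc, hmul]
    _ = 1 := Matrix.mul_nonsing_inv _ hBT

/-- For a finite subgroup `G` of `SO(3)`, the set of points of the unit sphere `S² ⊂ ℝ³`
whose stabilizer in `G` is nontrivial is finite. -/
theorem finite_subgroup_SO3_nontrivial_stabilizer_points_finite
    (G : Subgroup SO3) [Finite G] :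
    {x : EuclideanSpace ℝ (Fin 3) | ‖x‖ = 1 ∧
      ∃ g ∈ G, g ≠ 1 ∧ g • x = x}.Finite := by
  have key : {x : EuclideanSpace ℝ (Fin 3) | ‖x‖ = 1 ∧ ∃ g ∈ G, g ≠ 1 ∧ g • x = x} ⊆
      ⋃ g ∈ (G : Set SO3),
        {x : EuclideanSpace ℝ (Fin 3) | ‖x‖ = 1 ∧ g ≠ 1 ∧ g • x = x} := by
    rintro x ⟨hx, g, hg, hg1, hgx⟩
    exact Set.mem_biUnion hg ⟨hx, hg1, hgx⟩
  refine Set.Finite.subset (Set.Finite.biUnion (Set.toFinite _) ?_) key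
  intro g hg
  by_cases h1 : g = 1
  · simp [h1]
  rcases Set.eq_empty_or_nonempty
      {x : EuclideanSpace ℝ (Fin 3) | ‖x‖ = 1 ∧ g ≠ 1 ∧ g • x = x} with he | ⟨x0, hx0⟩
  · simp only [he]; exact Set.finite_empty
  obtain ⟨hx0n, -, hgx0⟩ := hx0
  apply Set.Finite.subset ((Set.finite_singleton (-x0)).insert x0)
  rintro y ⟨hyn, -, hgy⟩
  set A : Matrix (Fin 3) (Fin 3) ℝ := ((g : Matrix.orthogonalGroup (Fin 3) ℝ) :
    Matrix (Fin 3) (Fin 3) ℝ) with hAdef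
  have hA : Aᵀ * A = 1 :=
    myT A ((Unitary.mem_iff.mp (g : Matrix.orthogonalGroup (Fin 3) ℝ).2).1)
  have hdet : A.det = 1 := g.2
  have hx : A *ᵥ (x0 : Fin 3 → ℝ) = x0 := congrArg WithLp.ofLp hgx0
  have hy : A *ᵥ (y : Fin 3 → ℝ) = y := congrArg WithLp.ofLp hgy
  have hx0ne : (x0 : EuclideanSpace ℝ (Fin 3)) ≠ 0 := by
    intro hc; rw [hc] at hx0n; simp at hx0n
  by_cases hind : LinearIndependent ℝ ![(x0 : Fin 3 → ℝ), (y : Fin 3 → ℝ)]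
  · exfalso
    have hA1 : A = 1 := fix_two A hA hdet hind hx hy
    exact h1 (Subtype.ext (Subtype.ext hA1))
  · rw [LinearIndependent.pair_iff' (by intro hc; apply hx0ne; ext i; simpa using congrFun hc i)] at hind
    push_neg at hind
    obtain ⟨a, ha⟩ := hind
    have hya : (y : EuclideanSpace ℝ (Fin 3)) = a • x0 := by ext i; simpa using (congrFun ha i).symm
    have hnorm : |a| = 1 := by
      have := hyn
      rw [hya, norm_smul, hx0n, mul_one] at this
      simpa using this
    rcases abs_eq (by norm_num : (0:ℝ) ≤ 1) |>.mp hnorm with h | h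
    · left; rw [hya, h, one_smul]
    · right; rw [hya, h]; simp
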